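/- Let $G = K_{3,3}$ with color classes $\{u_1, u_2, u_3\}$ and $\{v_1, v_2, v_3\}$. Then there exists a matching $M$ of $G$ (namely $M = \{u_1v_1, u_2v_2, u_3v_3\}$) and an acyclic (hence AT-) orientation $D$ of $G - M$ such that $\Delta^+(D) \le 2$ and $d_D^+(u_1) = d_D^+(v_1) = 0$. -/
import Mathlib


/-- `D` (a finite set of arcs) is an orientation of the graph `G`:
every edge of `G` gets exactly one direction, and there are no other arcs. -/
def IsOrientation {V : Type*} (G : SimpleGraph V) (D : Finset (V × V)) : Prop :=
  ∀ x y : V, (G.Adj x y ↔ ((x, y) ∈ D ∨ (y, x) ∈ D)) ∧ ¬((x, y) ∈ D ∧ (y, x) ∈ D)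

/-- The out-degree of a vertex in a digraph given by its arc set. -/
def outDeg {V : Type*} [DecidableEq V] (D : Finset (V × V)) (x : V) : ℕ :=
  (D.filter fun p => p.1 = x).card

/-- The in-degree of a vertex in a digraph given by its arc set. -/
def inDeg {V : Type*} [DecidableEq V] (D : Finset (V × V)) (x : V) : ℕ :=
  (D.filter fun p => p.2 = x).card

/-- `H` is an Eulerian (spanning) subdigraph of `D`: a subset of the arcs such that
in-degree equals out-degree at every vertex. -/
def IsEulerianSub {V : Type*} [DecidableEq V] (D H : Finset (V × V)) : Prop :=
  H ⊆ D ∧ ∀ x, outDeg H x = inDeg H x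

/-- The set of Eulerian subdigraphs of `D` with an even number of arcs. -/
def EE {V : Type*} [DecidableEq V] (D : Finset (V × V)) : Set (Finset (V × V)) :=
  {H | IsEulerianSub D H ∧ Even H.card}

/-- The set of Eulerian subdigraphs of `D` with an odd number of arcs. -/
def OE {V : Type*} [DecidableEq V] (D : Finset (V × V)) : Set (Finset (V × V)) :=
  {H | IsEulerianSub D H ∧ Odd H.card}

/-- `D` is an AT-orientation if `|EE(D)| ≠ |OE(D)|`. -/
def IsATOrientation {V : Type*} [DecidableEq V] (D : Finset (V × V)) : Prop :=
  (EE D).ncard ≠ (OE D).ncard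

/-- A digraph is acyclic if it has no (nontrivial) closed directed walk. -/
def IsAcyclicOrientation {V : Type*} (D : Finset (V × V)) : Prop :=
  ¬ ∃ (n : ℕ) (c : ℕ → V), 0 < n ∧ c n = c 0 ∧ ∀ i < n, (c i, c (i + 1)) ∈ D

/-- The Alon–Tarsi number of `G`: the least `k` such that `G` has an
AT-orientation with all out-degrees less than `k`. -/
noncomputable def alonTarsiNumber {V : Type*} [DecidableEq V] (G : SimpleGraph V) : ℕ :=
  sInf {k | ∃ D : Finset (V × V),
    IsOrientation G D ∧ IsATOrientation D ∧ ∀ x, outDeg D x < k}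

/-- A simple graph is a matching if every vertex has at most one neighbour. -/
def IsMatchingGraph {V : Type*} (M : SimpleGraph V) : Prop :=
  ∀ x : V, (M.neighborSet x).Subsingleton

/-- The complete bipartite graph `K_{3,3}`. -/
def K33 : SimpleGraph (Fin 3 ⊕ Fin 3) := completeBipartiteGraph (Fin 3) (Fin 3)


-- Auxiliary material for the proof

instance : DecidableRel K33.Adj := fun x y =>
  inferInstanceAs (Decidable (x.isLeft ∧ y.isRight ∨ x.isRight ∧ y.isLeft))

instance : DecidableRel (SimpleGraph.fromRel
    (fun x y => ∃ i : Fin 3, x = Sum.inl i ∧ y = Sum.inr i)).Adj := fun x y =>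
  decidable_of_iff _ (SimpleGraph.fromRel_adj _ x y).symm

theorem acyclic_of_rank {V : Type*} (D : Finset (V × V)) (f : V → ℕ)
    (h : ∀ p ∈ D, f p.1 < f p.2) : IsAcyclicOrientation D := by
  rintro ⟨n, c, hn, hc, hstep⟩
  have key : ∀ i ≤ n, f (c 0) + i ≤ f (c i) := by
    intro i
    induction i with
    | zero => simp
    | succ k ih =>
      intro hk
      have h1 := ih (Nat.le_of_succ_le hk)
      have h2 : f (c k) < f (c (k + 1)) := h _ (hstep k (Nat.lt_of_succ_le hk))
      omega
  have := key n (le_refl n)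
  rw [hc] at this
  omega

theorem inDeg_eq_zero {V : Type*} [DecidableEq V] (H : Finset (V × V)) (x : V)
    (h : ∀ p ∈ H, p.2 ≠ x) : inDeg H x = 0 := by
  rw [inDeg, Finset.card_eq_zero, Finset.filter_eq_empty_iff]
  exact h

theorem notMem_of_outDeg_zero {V : Type*} [DecidableEq V] {H : Finset (V × V)} {x : V}
    (h : outDeg H x = 0) {y : V} : (x, y) ∉ H := by
  intro hp
  rw [outDeg, Finset.card_eq_zero, Finset.filter_eq_empty_iff] at h
  exact h hp rfl

/-- The explicit acyclic orientation of `K33` minus the matching. -/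
def myD : Finset ((Fin 3 ⊕ Fin 3) × (Fin 3 ⊕ Fin 3)) :=
  {(Sum.inr 1, Sum.inl 0), (Sum.inr 2, Sum.inl 0), (Sum.inl 1, Sum.inr 0),
   (Sum.inl 2, Sum.inr 0), (Sum.inl 1, Sum.inr 2), (Sum.inl 2, Sum.inr 1)}

theorem eulerian_empty (H : Finset ((Fin 3 ⊕ Fin 3) × (Fin 3 ⊕ Fin 3)))
    (hE : IsEulerianSub myD H) : H = ∅ := by
  obtain ⟨hsub, hbal⟩ := hE
  have hl1 : outDeg H (Sum.inl 1) = 0 := by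
    rw [hbal]
    refine inDeg_eq_zero _ _ fun p hp => ?_
    have hm : p ∈ myD := hsub hp
    fin_cases hm <;> simp
  have hl2 : outDeg H (Sum.inl 2) = 0 := by
    rw [hbal]
    refine inDeg_eq_zero _ _ fun p hp => ?_
    have hm : p ∈ myD := hsub hp
    fin_cases hm <;> simp
  have h3 : (Sum.inl 1, Sum.inr 0) ∉ H := notMem_of_outDeg_zero hl1
  have h5 : (Sum.inl 1, Sum.inr 2) ∉ H := notMem_of_outDeg_zero hl1
  have h4 : (Sum.inl 2, Sum.inr 0) ∉ H := notMem_of_outDeg_zero hl2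
  have h6 : (Sum.inl 2, Sum.inr 1) ∉ H := notMem_of_outDeg_zero hl2
  have hr1 : outDeg H (Sum.inr 1) = 0 := by
    rw [hbal]
    refine inDeg_eq_zero _ _ fun p hp => ?_
    have hm : p ∈ myD := hsub hp
    fin_cases hm <;> simp_all
  have hr2 : outDeg H (Sum.inr 2) = 0 := by
    rw [hbal]
    refine inDeg_eq_zero _ _ fun p hp => ?_
    have hm : p ∈ myD := hsub hp
    fin_cases hm <;> simp_all
  have h1 : (Sum.inr 1, Sum.inl 0) ∉ H := notMem_of_outDeg_zero hr1
  have h2 : (Sum.inr 2, Sum.inl 0) ∉ H := notMem_of_outDeg_zero hr2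
  rw [Finset.eq_empty_iff_forall_notMem]
  intro p hp
  have hm : p ∈ myD := hsub hp
  fin_cases hm <;> simp_all

/-- Let `G = K_{3,3}` with color classes `{u₁,u₂,u₃}` (the left copy of `Fin 3`) and
`{v₁,v₂,v₃}` (the right copy). There exist a matching `M` of `G`, namely
`M = {u₁v₁, u₂v₂, u₃v₃}`, and an acyclic (hence AT-) orientation `D` of `G - M`
with `Δ⁺(D) ≤ 2` and `d⁺_D(u₁) = d⁺_D(v₁) = 0`. -/
theorem K33_matching_acyclic_orientation :
    ∃ M : SimpleGraph (Fin 3 ⊕ Fin 3),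
      M = SimpleGraph.fromRel (fun x y => ∃ i : Fin 3, x = Sum.inl i ∧ y = Sum.inr i) ∧
      M ≤ K33 ∧ IsMatchingGraph M ∧
      ∃ D : Finset ((Fin 3 ⊕ Fin 3) × (Fin 3 ⊕ Fin 3)),
        IsOrientation (K33 \ M) D ∧ IsAcyclicOrientation D ∧ IsATOrientation D ∧
        (∀ x, outDeg D x ≤ 2) ∧
        outDeg D (Sum.inl 0) = 0 ∧ outDeg D (Sum.inr 0) = 0 := by
  refine ⟨_, rfl, ?_, ?_, myD, ?_, ?_, ?_, ?_, ?_, ?_⟩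
  · intro x y h
    rw [SimpleGraph.fromRel_adj] at h
    obtain ⟨hne, h | h⟩ := h <;> obtain ⟨i, rfl, rfl⟩ := h <;> simp [K33]
  · intro x a ha b hb
    simp only [SimpleGraph.mem_neighborSet, SimpleGraph.fromRel_adj] at ha hb
    obtain ⟨-, ha | ha⟩ := ha <;> obtain ⟨i, hi1, hi2⟩ := ha <;>
      obtain ⟨-, hb | hb⟩ := hb <;> obtain ⟨j, hj1, hj2⟩ := hb <;> subst_vars <;>
      simp_all
  · unfold IsOrientation; decide
  · exact acyclic_of_rank _ (fun x => match x with
      | Sum.inl 0 => 2 | Sum.inr 0 => 2 | Sum.inl _ => 0 | Sum.inr _ => 1)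
      (by decide)
  · unfold IsATOrientation
    have hEE : EE myD = {∅} := by
      ext H
      simp only [EE, Set.mem_setOf_eq, Set.mem_singleton_iff]
      constructor
      · rintro ⟨hE, -⟩; exact eulerian_empty H hE
      · rintro rfl
        exact ⟨⟨Finset.empty_subset _, fun x => by simp [outDeg, inDeg]⟩, by simp⟩
    have hOE : OE myD = ∅ := by
      ext H
      simp only [OE, Set.mem_setOf_eq, Set.mem_empty_iff_false, iff_false, not_and]
      intro hE
      rw [eulerian_empty H hE]
      simp
    rw [hEE, hOE]
    simp
  · decide
  · decide
  · decide
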